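/- Let E be a real inner product space, let f : E → ℝ be convex and differentiable with β-Lipschitz gradient (β > 0), and let 0 ≤ α ≤ 2/β. Then the gradient update map G(w) = w − α∇f(w) is 1-expansive, i.e. ‖G(w) − G(w')‖ ≤ ‖w − w'‖ for all w, w' ∈ E. -/

import Mathlib

open RealInnerProductSpace Set

section Aux
variable {E : Type*} [NormedAddCommGroup E] [InnerProductSpace ℝ E]

lemma line_hasDerivAt (x y : E) (t : ℝ) :
    HasDerivAt (fun t : ℝ => x + t • (y - x)) (y - x) t := by
  simpa using ((hasDerivAt_id t).smul_const (y - x)).const_add x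

lemma phi_hasDerivAt (f : E → ℝ) (f' : E → E)
    (hdiff : ∀ x, HasFDerivAt f (InnerProductSpace.toDualMap ℝ E (f' x)) x)
    (x y : E) (t : ℝ) :
    HasDerivAt (fun t : ℝ => f (x + t • (y - x)))
      ⟪f' (x + t • (y - x)), y - x⟫ t := by
  simpa [Function.comp_def] using (hdiff (x + t • (y - x))).comp_hasDerivAt t (line_hasDerivAt x y t)

/-- first-order condition for convexity -/
lemma grad_ineq (f : E → ℝ) (f' : E → E)
    (hconv : ConvexOn ℝ Set.univ f)
    (hdiff : ∀ x, HasFDerivAt f (InnerProductSpace.toDualMap ℝ E (f' x)) x)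
    (x y : E) : f x + ⟪f' x, y - x⟫ ≤ f y := by
  set φ : ℝ → ℝ := fun t => f (x + t • (y - x)) with hφdef
  have h0 : φ 0 = f x := by simp [hφdef]
  have hd : HasDerivAt φ ⟪f' x, y - x⟫ 0 := by
    simpa using phi_hasDerivAt f f' hdiff x y 0
  have hslope : Filter.Tendsto (slope φ 0) (nhdsWithin 0 (Ioi 0)) (nhds ⟪f' x, y - x⟫) := by
    have := hasDerivAt_iff_tendsto_slope.1 hd
    exact this.mono_left (nhdsWithin_mono _ (fun t ht => ne_of_gt ht))
  have hle : ⟪f' x, y - x⟫ ≤ f y - f x := by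
    refine le_of_tendsto hslope ?_
    filter_upwards [Ioc_mem_nhdsGT_of_mem (by norm_num : (0:ℝ) ∈ Ico (0:ℝ) 1)] with t ht
    have ht0 : 0 < t := ht.1
    have hcv := hconv.2 (mem_univ x) (mem_univ y) (by linarith [ht.2] : (0:ℝ) ≤ 1 - t)
      (le_of_lt ht0) (by ring)
    have hpt : (1 - t) • x + t • y = x + t • (y - x) := by module
    rw [hpt] at hcv
    have : φ t ≤ f x + t * (f y - f x) := by
      simp only [smul_eq_mul] at hcv; simpa [hφdef] using by linarith
    rw [slope_def_field, h0, sub_zero, div_le_iff₀ ht0]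
    linarith
  linarith

/-- descent lemma -/
lemma descent (f : E → ℝ) (f' : E → E) (β : ℝ) (hβ : 0 < β)
    (hdiff : ∀ x, HasFDerivAt f (InnerProductSpace.toDualMap ℝ E (f' x)) x)
    (hlip : ∀ x y, ‖f' x - f' y‖ ≤ β * ‖x - y‖)
    (x y : E) : f y ≤ f x + ⟪f' x, y - x⟫ + β / 2 * ‖y - x‖ ^ 2 := by
  set C : ℝ := ‖y - x‖ ^ 2 with hC
  set ψ : ℝ → ℝ := fun t => f (x + t • (y - x)) - t * ⟪f' x, y - x⟫ - β / 2 * t ^ 2 * C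
    with hψdef
  have hψd : ∀ t : ℝ, HasDerivAt ψ
      (⟪f' (x + t • (y - x)), y - x⟫ - ⟪f' x, y - x⟫ - β * t * C) t := by
    intro t
    have h1 := phi_hasDerivAt f f' hdiff x y t
    have h2 : HasDerivAt (fun t : ℝ => t * ⟪f' x, y - x⟫) ⟪f' x, y - x⟫ t := by
      simpa using (hasDerivAt_id t).mul_const ⟪f' x, y - x⟫
    have h3 : HasDerivAt (fun t : ℝ => β / 2 * t ^ 2 * C) (β * t * C) t := by
      have := ((hasDerivAt_pow 2 t).const_mul (β / 2)).mul_const C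
      exact this.congr_deriv (by ring)
    exact (h1.sub h2).sub h3
  have hmono : AntitoneOn ψ (Icc 0 1) := by
    apply antitoneOn_of_deriv_nonpos (convex_Icc 0 1)
    · exact fun t _ => ((hψd t).differentiableAt).continuousAt.continuousWithinAt
    · exact fun t _ => ((hψd t).differentiableAt).differentiableWithinAt
    · intro t ht
      rw [interior_Icc] at ht
      rw [(hψd t).deriv]
      have hib : ⟪f' (x + t • (y - x)) - f' x, y - x⟫ ≤ β * t * C := by
        calc ⟪f' (x + t • (y - x)) - f' x, y - x⟫
            ≤ ‖f' (x + t • (y - x)) - f' x‖ * ‖y - x‖ := real_inner_le_norm _ _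
          _ ≤ β * ‖(x + t • (y - x)) - x‖ * ‖y - x‖ := by
              have := hlip (x + t • (y - x)) x
              have hn : (0:ℝ) ≤ ‖y - x‖ := norm_nonneg _
              nlinarith [norm_nonneg (f' (x + t • (y - x)) - f' x)]
          _ = β * t * C := by
              rw [add_sub_cancel_left, norm_smul, Real.norm_eq_abs, abs_of_pos ht.1, hC]
              ring
      rw [inner_sub_left] at hib
      linarith
  have h01 := hmono (by constructor <;> norm_num) (by constructor <;> norm_num) zero_le_one
  simp only [hψdef, zero_smul, add_zero, one_smul, zero_mul, zero_pow, mul_zero, sub_zero,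
    one_pow, mul_one, one_mul] at h01
  have hxy : x + (y - x) = y := by abel
  rw [hxy] at h01
  linarith

lemma half_cocoercive (f : E → ℝ) (f' : E → E) (β : ℝ) (hβ : 0 < β)
    (hconv : ConvexOn ℝ Set.univ f)
    (hdiff : ∀ x, HasFDerivAt f (InnerProductSpace.toDualMap ℝ E (f' x)) x)
    (hlip : ∀ x y, ‖f' x - f' y‖ ≤ β * ‖x - y‖)
    (x y : E) :
    f y - ⟪f' y, y⟫ ≤ f x - ⟪f' y, x⟫ - 1 / (2 * β) * ‖f' x - f' y‖ ^ 2 := by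
  set h : E → ℝ := fun z => f z - ⟪f' y, z⟫ with hh
  set h' : E → E := fun z => f' z - f' y with hh'
  have hdiffh : ∀ z, HasFDerivAt h (InnerProductSpace.toDualMap ℝ E (h' z)) z := by
    intro z
    have := (hdiff z).sub (InnerProductSpace.toDualMap ℝ E (f' y)).hasFDerivAt
    rw [show (InnerProductSpace.toDualMap ℝ E (h' z)) =
      InnerProductSpace.toDualMap ℝ E (f' z) - InnerProductSpace.toDualMap ℝ E (f' y) by
      rw [hh', map_sub]]
    simpa [hh, Pi.sub_def] using this
  have hconvh : ConvexOn ℝ Set.univ h := by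
    refine ⟨convex_univ, fun a _ b _ p q hp hq hpq => ?_⟩
    have := hconv.2 (mem_univ a) (mem_univ b) hp hq hpq
    simp only [hh, smul_eq_mul, inner_add_right, real_inner_smul_right] at *
    linarith
  have hliph : ∀ a b, ‖h' a - h' b‖ ≤ β * ‖a - b‖ := by
    intro a b
    simpa [hh', sub_sub_sub_cancel_right] using hlip a b
  -- h is minimized at y
  have hmin : h y ≤ h x - 1 / (2 * β) * ‖h' x‖ ^ 2 := by
    have h1 : h y ≤ h (x - β⁻¹ • h' x) := by
      have := grad_ineq h h' hconvh hdiffh y (x - β⁻¹ • h' x)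
      simpa [hh', sub_self, inner_zero_left] using this
    have h2 := descent h h' β hβ hdiffh hliph x (x - β⁻¹ • h' x)
    have he : (x - β⁻¹ • h' x) - x = -(β⁻¹ • h' x) := by abel
    rw [he] at h2
    have hi : ⟪h' x, -(β⁻¹ • h' x)⟫ = -(β⁻¹ * ‖h' x‖ ^ 2) := by
      rw [inner_neg_right, real_inner_smul_right, real_inner_self_eq_norm_sq]
    have hn : ‖-(β⁻¹ • h' x)‖ ^ 2 = β⁻¹ ^ 2 * ‖h' x‖ ^ 2 := by
      rw [norm_neg, norm_smul, Real.norm_eq_abs, abs_of_pos (by positivity), mul_pow]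
    rw [hi, hn] at h2
    have hc : β / 2 * (β⁻¹ ^ 2 * ‖h' x‖ ^ 2) - β⁻¹ * ‖h' x‖ ^ 2
        = -(1 / (2 * β) * ‖h' x‖ ^ 2) := by
      field_simp; ring
    calc h y ≤ h (x - β⁻¹ • h' x) := h1
      _ ≤ h x - 1 / (2 * β) * ‖h' x‖ ^ 2 := by linarith
  simpa [hh, hh'] using hmin

lemma cocoercive (f : E → ℝ) (f' : E → E) (β : ℝ) (hβ : 0 < β)
    (hconv : ConvexOn ℝ Set.univ f)
    (hdiff : ∀ x, HasFDerivAt f (InnerProductSpace.toDualMap ℝ E (f' x)) x)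
    (hlip : ∀ x y, ‖f' x - f' y‖ ≤ β * ‖x - y‖)
    (x y : E) :
    1 / β * ‖f' x - f' y‖ ^ 2 ≤ ⟪f' x - f' y, x - y⟫ := by
  have h1 := half_cocoercive f f' β hβ hconv hdiff hlip x y
  have h2 := half_cocoercive f f' β hβ hconv hdiff hlip y x
  rw [norm_sub_rev] at h2
  have hexp : ⟪f' x - f' y, x - y⟫
      = ⟪f' x, x⟫ - ⟪f' x, y⟫ - ⟪f' y, x⟫ + ⟪f' y, y⟫ := by
    rw [inner_sub_left, inner_sub_right, inner_sub_right]; ring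
  rw [hexp]
  have : 1 / β = 1 / (2 * β) + 1 / (2 * β) := by field_simp; ring
  rw [this]
  linarith

end Aux

/-- **Lemma 4(b).** Let `E` be a real inner product space, `f : E → ℝ` convex and differentiable
with `β`-Lipschitz gradient `f'` (`β > 0`), and `0 ≤ α ≤ 2/β`.  Then the gradient update map
`G w = w - α • f' w` is `1`-expansive. -/
theorem sgd_update_nonexpansive_convex_smooth
    {E : Type*} [NormedAddCommGroup E] [InnerProductSpace ℝ E]
    (f : E → ℝ) (f' : E → E) (β α : ℝ) (hβ : 0 < β) (hα : 0 ≤ α) (hα2 : α ≤ 2 / β)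
    (hconv : ConvexOn ℝ Set.univ f)
    (hdiff : ∀ x, HasFDerivAt f (InnerProductSpace.toDualMap ℝ E (f' x)) x)
    (hlip : ∀ x y, ‖f' x - f' y‖ ≤ β * ‖x - y‖)
    (w w' : E) :
    ‖(w - α • f' w) - (w' - α • f' w')‖ ≤ ‖w - w'‖ := by
  set g : E := f' w - f' w' with hg
  set d : E := w - w' with hd
  have hrw : (w - α • f' w) - (w' - α • f' w') = d - α • g := by
    rw [hd, hg, smul_sub]; abel
  rw [hrw]
  have hco := cocoercive f f' β hβ hconv hdiff hlip w w'
  rw [← hg, ← hd] at hco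
  have hsq : ‖d - α • g‖ ^ 2 ≤ ‖d‖ ^ 2 := by
    have hexp : ‖d - α • g‖ ^ 2 = ‖d‖ ^ 2 - 2 * (α * ⟪g, d⟫) + α ^ 2 * ‖g‖ ^ 2 := by
      rw [norm_sub_sq_real, real_inner_smul_right, norm_smul, Real.norm_eq_abs,
        abs_of_nonneg hα, mul_pow, real_inner_comm]
    rw [hexp]
    have hαβ : α ^ 2 ≤ 2 * α * (1 / β) := by
      have := mul_le_mul_of_nonneg_left hα2 hα
      calc α ^ 2 = α * α := sq α
        _ ≤ α * (2 / β) := this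
        _ = 2 * α * (1 / β) := by ring
    have h2 : 2 * α * (1 / β * ‖g‖ ^ 2) ≤ 2 * α * ⟪g, d⟫ :=
      mul_le_mul_of_nonneg_left hco (by linarith)
    have h3 : α ^ 2 * ‖g‖ ^ 2 ≤ 2 * α * (1 / β) * ‖g‖ ^ 2 :=
      mul_le_mul_of_nonneg_right hαβ (sq_nonneg _)
    linarith
  nlinarith [norm_nonneg (d - α • g), norm_nonneg d]
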